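/- For every integer n ≥ 3, there exists an orientation preserving piecewise linear homeomorphism F : R^2 → R^2 with F(Z^2) = Z^2 such that F^n = id and F^k ≠ id for 1 ≤ k < n. -/
import Mathlib


/-- The closed rational sector in ℝ² generated by `u, v ∈ ℤ²`. -/
def secR (u v : ℤ × ℤ) : Set (ℝ × ℝ) :=
  {x | ∃ s t : ℝ, 0 ≤ s ∧ 0 ≤ t ∧
    x.1 = s * (u.1 : ℝ) + t * (v.1 : ℝ) ∧ x.2 = s * (u.2 : ℝ) + t * (v.2 : ℝ)}

/-- The lattice ℤ² inside ℝ². -/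
def latticePts : Set (ℝ × ℝ) := {x | ∃ p : ℤ × ℤ, x = ((p.1 : ℝ), (p.2 : ℝ))}

namespace S9

def base (n : ℕ) (j : ℕ) : ℤ × ℤ :=
  if j = 0 then (1, 0) else if j = n - 1 then (-1, -1) else ((n : ℤ) - 2 - (j : ℤ), 1)

def vv (n i : ℕ) : ℤ × ℤ := base n (i % n)

lemma vv_mod (n i : ℕ) : vv n (i % n) = vv n i := by
  unfold vv; rw [Nat.mod_mod]

lemma vv_mod_add (n i k : ℕ) : vv n (i % n + k) = vv n (i + k) := by
  unfold vv; rw [Nat.mod_add_mod]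

lemma vv_add_n (n i : ℕ) : vv n (i + n) = vv n i := by
  unfold vv; rw [Nat.add_mod_right]

lemma vv_zero (n : ℕ) (hn : 3 ≤ n) : vv n 0 = (1, 0) := by
  unfold vv base
  rw [Nat.zero_mod]
  simp

lemma vv_last (n : ℕ) (hn : 3 ≤ n) : vv n (n-1) = (-1, -1) := by
  unfold vv base
  rw [Nat.mod_eq_of_lt (by omega)]
  rw [if_neg (by omega), if_pos rfl]

lemma vv_mid (n j : ℕ) (hn : 3 ≤ n) (h1 : 1 ≤ j) (h2 : j ≤ n - 2) :
    vv n j = ((n : ℤ) - 2 - (j : ℤ), 1) := by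
  unfold vv base
  rw [Nat.mod_eq_of_lt (by omega)]
  rw [if_neg (by omega), if_neg (by omega)]

lemma hdetZ (n : ℕ) (hn : 3 ≤ n) (i : ℕ) :
    (vv n i).1 * (vv n (i+1)).2 - (vv n i).2 * (vv n (i+1)).1 = 1 := by
  have h1 : vv n i = vv n (i % n) := (vv_mod n i).symm
  have h2 : vv n (i + 1) = vv n (i % n + 1) := (vv_mod_add n i 1).symm
  rw [h1, h2]
  have hjn : i % n < n := Nat.mod_lt _ (by omega)
  revert hjn
  generalize i % n = j
  intro hjn
  by_cases h0 : j = 0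
  · rw [h0]
    rw [vv_zero n hn, vv_mid n 1 hn le_rfl (by omega)]
    push_cast; ring
  · by_cases hl : j = n - 1
    · rw [hl]
      rw [vv_last n hn]
      have : n - 1 + 1 = n := by omega
      rw [this]
      have : vv n n = vv n 0 := by unfold vv; rw [Nat.mod_self, Nat.zero_mod]
      rw [this, vv_zero n hn]
      simp
    · by_cases hm : j = n - 2
      · rw [hm]
        rw [vv_mid n (n-2) hn (by omega) le_rfl]
        have : n - 2 + 1 = n - 1 := by omega
        rw [this, vv_last n hn]
        have hc : ((n : ℤ) - 2 - ((n : ℕ) - 2 : ℕ)) = 0 := by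
          push_cast [Nat.cast_sub (by omega : 2 ≤ n)]; ring
        simp [hc]
      · rw [vv_mid n j hn (by omega) (by omega), vv_mid n (j+1) hn (by omega) (by omega)]
        push_cast; ring


noncomputable def pp (n i : ℕ) : ℝ := ((vv n i).1 : ℝ)
noncomputable def qq (n i : ℕ) : ℝ := ((vv n i).2 : ℝ)

lemma hdetR (n : ℕ) (hn : 3 ≤ n) (i : ℕ) :
    pp n i * qq n (i+1) - qq n i * pp n (i+1) = 1 := by
  have := hdetZ n hn i
  unfold pp qq
  exact_mod_cast this

noncomputable def gR (n i : ℕ) (x : ℝ × ℝ) : ℝ := pp n i * x.2 - qq n i * x.1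

def aI (n i : ℕ) : ℤ := (vv n (i+1)).1 * (vv n (i+1)).2 - (vv n (i+2)).1 * (vv n i).2
def bI (n i : ℕ) : ℤ := (vv n (i+2)).1 * (vv n i).1 - (vv n (i+1)).1 * (vv n (i+1)).1
def cI (n i : ℕ) : ℤ := (vv n (i+1)).2 * (vv n (i+1)).2 - (vv n (i+2)).2 * (vv n i).2
def eI (n i : ℕ) : ℤ := (vv n (i+2)).2 * (vv n i).1 - (vv n (i+1)).2 * (vv n (i+1)).1

noncomputable def Af (n i : ℕ) (x : ℝ × ℝ) : ℝ × ℝ :=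
  ((aI n i : ℝ) * x.1 + (bI n i : ℝ) * x.2, (cI n i : ℝ) * x.1 + (eI n i : ℝ) * x.2)

lemma aI_cast (n i : ℕ) : (aI n i : ℝ) = pp n (i+1) * qq n (i+1) - pp n (i+2) * qq n i := by
  simp only [aI, pp, qq]; push_cast; ring
lemma bI_cast (n i : ℕ) : (bI n i : ℝ) = pp n (i+2) * pp n i - pp n (i+1) * pp n (i+1) := by
  simp only [bI, pp, qq]; push_cast; ring
lemma cI_cast (n i : ℕ) : (cI n i : ℝ) = qq n (i+1) * qq n (i+1) - qq n (i+2) * qq n i := by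
  simp only [cI, pp, qq]; push_cast; ring
lemma eI_cast (n i : ℕ) : (eI n i : ℝ) = qq n (i+2) * pp n i - qq n (i+1) * pp n (i+1) := by
  simp only [eI, pp, qq]; push_cast; ring

/-- I1 : the linear map sends s v_i + t v_{i+1} to s v_{i+1} + t v_{i+2}. -/
lemma Af_map (n : ℕ) (hn : 3 ≤ n) (i : ℕ) (s t : ℝ) (x : ℝ × ℝ)
    (h1 : x.1 = s * pp n i + t * pp n (i+1)) (h2 : x.2 = s * qq n i + t * qq n (i+1)) :
    Af n i x = (s * pp n (i+1) + t * pp n (i+2), s * qq n (i+1) + t * qq n (i+2)) := by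
  have hd := hdetR n hn i
  unfold Af
  rw [aI_cast, bI_cast, cI_cast, eI_cast, h1, h2]
  simp only [Prod.mk.injEq]
  constructor <;>
    [linear_combination (s * pp n (i+1) + t * pp n (i+2)) * hd;
     linear_combination (s * qq n (i+1) + t * qq n (i+2)) * hd]

/-- I2 : determinant one. -/
lemma detA (n : ℕ) (hn : 3 ≤ n) (i : ℕ) : aI n i * eI n i - bI n i * cI n i = 1 := by
  have h1 := hdetZ n hn i
  have h2 := hdetZ n hn (i+1)
  unfold aI bI cI eI
  linear_combination ((vv n (i+1)).1 * (vv n (i+2)).2 - (vv n (i+1)).2 * (vv n (i+2)).1) * h1 + h2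

/-- I3 : values of g on a decomposed point. -/
lemma g_decomp (n : ℕ) (hn : 3 ≤ n) (i : ℕ) (s t : ℝ) (x : ℝ × ℝ)
    (h1 : x.1 = s * pp n i + t * pp n (i+1)) (h2 : x.2 = s * qq n i + t * qq n (i+1)) :
    gR n i x = t ∧ gR n (i+1) x = -s := by
  have hd := hdetR n hn i
  unfold gR
  rw [h1, h2]
  constructor
  · linear_combination t * hd
  · linear_combination (-s) * hd

/-- I4 : reconstruction of the coefficients. -/
lemma decomp_of_g (n : ℕ) (hn : 3 ≤ n) (i : ℕ) (x : ℝ × ℝ) :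
    x.1 = (-(gR n (i+1) x)) * pp n i + (gR n i x) * pp n (i+1) ∧
    x.2 = (-(gR n (i+1) x)) * qq n i + (gR n i x) * qq n (i+1) := by
  have hd := hdetR n hn i
  unfold gR
  constructor
  · linear_combination (-x.1) * hd
  · linear_combination (-x.2) * hd

def P (n : ℕ) (x : ℝ × ℝ) (i : ℕ) : Prop := 0 ≤ gR n i x ∧ gR n (i+1) x ≤ 0

open Classical in
noncomputable def Fn (n : ℕ) (x : ℝ × ℝ) : ℝ × ℝ :=
  if h : ∃ i, P n x i then Af n (Nat.find h) x else x


lemma gR_mod (n i : ℕ) (x : ℝ × ℝ) : gR n (i % n) x = gR n i x := by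
  unfold gR pp qq; rw [vv_mod]

lemma gR_succ_mod (n i : ℕ) (x : ℝ × ℝ) : gR n (i % n + 1) x = gR n (i+1) x := by
  unfold gR pp qq; rw [vv_mod_add]

lemma gR_add_n (n i : ℕ) (x : ℝ × ℝ) : gR n (i + n) x = gR n i x := by
  unfold gR pp qq; rw [vv_add_n]

lemma gR_add_mul (n i m : ℕ) (x : ℝ × ℝ) : gR n (i + m * n) x = gR n i x := by
  induction m with
  | zero => simp
  | succ m ih =>
      have h : i + (m+1) * n = (i + m * n) + n := by ring
      rw [h, gR_add_n, ih]

lemma Af_mod (n i : ℕ) (x : ℝ × ℝ) : Af n (i % n) x = Af n i x := by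
  have e0 : vv n (i % n) = vv n i := vv_mod n i
  have e1 : vv n (i % n + 1) = vv n (i + 1) := vv_mod_add n i 1
  have e2 : vv n (i % n + 2) = vv n (i + 2) := vv_mod_add n i 2
  simp only [Af, aI, bI, cI, eI, e0, e1, e2]

lemma P_mod (n i : ℕ) (x : ℝ × ℝ) : P n x (i % n) ↔ P n x i := by
  unfold P; rw [gR_mod, gR_succ_mod]

lemma gR_zero (n : ℕ) (hn : 3 ≤ n) (x : ℝ × ℝ) : gR n 0 x = x.2 := by
  unfold gR pp qq; rw [vv_zero n hn]; simp

lemma gR_last (n : ℕ) (hn : 3 ≤ n) (x : ℝ × ℝ) : gR n (n-1) x = x.1 - x.2 := by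
  unfold gR pp qq; rw [vv_last n hn]; push_cast; ring

lemma gR_mid (n j : ℕ) (hn : 3 ≤ n) (h1 : 1 ≤ j) (h2 : j ≤ n - 2) (x : ℝ × ℝ) :
    gR n j x = ((n : ℝ) - 2 - (j : ℝ)) * x.2 - x.1 := by
  unfold gR pp qq; rw [vv_mid n j hn h1 h2]; push_cast; ring

lemma gR_n (n : ℕ) (hn : 3 ≤ n) (x : ℝ × ℝ) : gR n n x = x.2 := by
  have : gR n n x = gR n (n % n) x := (gR_mod n n x).symm
  rw [this, Nat.mod_self, gR_zero n hn]

lemma walk (n : ℕ) (hn : 3 ≤ n) (x : ℝ × ℝ) (a b : ℕ)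
    (ha : 0 ≤ gR n a x) (hb : gR n b x ≤ 0) : ∃ i, P n x i := by
  classical
  have hex : ∃ k, gR n (a + 1 + k) x ≤ 0 := by
    refine ⟨b + (a+1) * n - (a+1), ?_⟩
    have hge : a + 1 ≤ (a+1) * n := Nat.le_mul_of_pos_right _ (by omega)
    have h1 : a + 1 + (b + (a+1) * n - (a+1)) = b + (a+1) * n := by omega
    rw [h1, gR_add_mul]
    exact hb
  have hm0 : Nat.find hex = 0 ∨ ∃ m', Nat.find hex = m' + 1 := by
    rcases Nat.eq_zero_or_pos (Nat.find hex) with h | h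
    · exact Or.inl h
    · exact Or.inr ⟨Nat.find hex - 1, by omega⟩
  rcases hm0 with h | ⟨m', hm'⟩
  · refine ⟨a, ha, ?_⟩
    have := Nat.find_spec hex
    rw [h] at this
    simpa using this
  · have hprev : ¬ gR n (a + 1 + m') x ≤ 0 := Nat.find_min hex (by omega)
    refine ⟨a + 1 + m', le_of_lt (lt_of_not_ge hprev), ?_⟩
    have hspec := Nat.find_spec hex
    rw [hm'] at hspec
    have he : a + 1 + m' + 1 = a + 1 + (m' + 1) := by omega
    rw [he]
    exact hspec

lemma cover (n : ℕ) (hn : 3 ≤ n) (x : ℝ × ℝ) : ∃ i, P n x i := by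
  have hsum : gR n 0 x + gR n (n-2) x + gR n (n-1) x = 0 := by
    rw [gR_zero n hn, gR_last n hn, gR_mid n (n-2) hn (by omega) le_rfl]
    have : ((n:ℝ) - 2 - ((n-2 : ℕ) : ℝ)) = 0 := by
      rw [Nat.cast_sub (by omega : 2 ≤ n)]; push_cast; ring
    rw [this]; ring
  have key : ∃ a b, 0 ≤ gR n a x ∧ gR n b x ≤ 0 := by
    rcases le_total 0 (gR n 0 x) with h0 | h0
    · rcases le_total 0 (gR n (n-2) x) with h2 | h2
      · exact ⟨0, n-1, h0, by linarith⟩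
      · exact ⟨0, n-2, h0, h2⟩
    · rcases le_total 0 (gR n (n-2) x) with h2 | h2
      · exact ⟨n-2, 0, h2, h0⟩
      · exact ⟨n-1, 0, by linarith, h0⟩
  obtain ⟨a, b, ha, hb⟩ := key
  exact walk n hn x a b ha hb

lemma cover_lt (n : ℕ) (hn : 3 ≤ n) (x : ℝ × ℝ) : ∃ i < n, P n x i := by
  obtain ⟨i, hi⟩ := cover n hn x
  exact ⟨i % n, Nat.mod_lt _ (by omega), (P_mod n i x).mpr hi⟩


lemma sep (n : ℕ) (hn : 3 ≤ n) (i j : ℕ) (x : ℝ × ℝ)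
    (hij : i + 2 ≤ j) (hj : j < n) (hne : ¬(i = 0 ∧ j = n-1))
    (hPi : P n x i) (hPj : P n x j) : x = 0 := by
  obtain ⟨hi1, hi2⟩ := hPi
  obtain ⟨hj1, hj2⟩ := hPj
  rw [gR_mid n (i+1) hn (by omega) (by omega)] at hi2
  have hYX : x = (x.1, x.2) := rfl
  by_cases hi0 : i = 0
  · subst hi0
    have hjle : j ≤ n - 2 := by
      rcases Nat.lt_or_ge j (n-1) with h | h
      · omega
      · exact absurd ⟨rfl, by omega⟩ hne
    rw [gR_zero n hn] at hi1
    rw [gR_mid n j hn (by omega) hjle] at hj1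
    push_cast at hi2 hj1
    have hjc : (2:ℝ) ≤ (j:ℝ) := by exact_mod_cast (by omega : 2 ≤ j)
    have hY : x.2 = 0 := by
      nlinarith [mul_nonneg hi1 (by linarith : (0:ℝ) ≤ (j:ℝ) - 1)]
    have hX : x.1 = 0 := by
      rw [hY] at hi2 hj1; linarith
    rw [hYX, hX, hY]; rfl
  · have hige : 1 ≤ i := by omega
    rw [gR_mid n i hn hige (by omega)] at hi1
    push_cast at hi1 hi2
    by_cases hjl : j = n - 1
    · subst hjl
      rw [show n - 1 + 1 = n from by omega, gR_n n hn] at hj2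
      rw [gR_last n hn] at hj1
      have hY : x.2 = 0 := le_antisymm hj2 (by linarith)
      have hX : x.1 = 0 := by
        rw [hY] at hi1 hj1; linarith
      rw [hYX, hX, hY]; rfl
    · have hjle : j ≤ n - 2 := by omega
      rw [gR_mid n j hn (by omega) hjle] at hj1
      push_cast at hj1
      have hji : (i:ℝ) + 2 ≤ (j:ℝ) := by exact_mod_cast hij
      have hY0 : 0 ≤ x.2 := by linarith
      have hY : x.2 = 0 := by
        nlinarith [mul_nonneg hY0 (by linarith : (0:ℝ) ≤ (j:ℝ) - (i:ℝ) - 1)]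
      have hX : x.1 = 0 := by
        rw [hY] at hi2 hj1; linarith
      rw [hYX, hX, hY]; rfl

lemma agree_adj (n : ℕ) (hn : 3 ≤ n) (i : ℕ) (x : ℝ × ℝ)
    (h0 : gR n (i+1) x = 0) : Af n i x = Af n (i+1) x := by
  obtain ⟨h1, h2⟩ := decomp_of_g n hn i x
  rw [h0] at h1 h2
  set t := gR n i x with ht
  have e1 : x.1 = 0 * pp n i + t * pp n (i+1) := by rw [h1]; ring
  have e2 : x.2 = 0 * qq n i + t * qq n (i+1) := by rw [h2]; ring
  have eA := Af_map n hn i 0 t x e1 e2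
  have e1' : x.1 = t * pp n (i+1) + 0 * pp n (i+2) := by rw [h1]; ring
  have e2' : x.2 = t * qq n (i+1) + 0 * qq n (i+2) := by rw [h2]; ring
  have eB := Af_map n hn (i+1) t 0 x e1' e2'
  rw [eA, eB]
  simp only [Prod.mk.injEq]
  constructor <;> ring

lemma Af_zero (n i : ℕ) : Af n i 0 = 0 := by
  unfold Af; simp

lemma agree_le (n : ℕ) (hn : 3 ≤ n) {x : ℝ × ℝ} {i j : ℕ} (hij : i ≤ j)
    (hi : i < n) (hj : j < n) (hPi : P n x i) (hPj : P n x j) :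
    Af n i x = Af n j x := by
  rcases Nat.eq_or_lt_of_le hij with rfl | hlt
  · rfl
  by_cases hadj : j = i + 1
  · subst hadj
    exact agree_adj n hn i x (le_antisymm hPi.2 hPj.1)
  by_cases hcyc : i = 0 ∧ j = n - 1
  · obtain ⟨rfl, rfl⟩ := hcyc
    have hx2 : gR n n x = 0 := by
      rw [gR_n n hn]
      have hle : x.2 ≤ 0 := by
        have := hPj.2
        rwa [show n - 1 + 1 = n from by omega, gR_n n hn] at this
      have hge : 0 ≤ x.2 := by
        have := hPi.1
        rwa [gR_zero n hn] at this
      linarith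
    have h1 : Af n (n-1) x = Af n n x := by
      have := agree_adj n hn (n-1) x (by rwa [show n - 1 + 1 = n from by omega])
      rwa [show n - 1 + 1 = n from by omega] at this
    have h2 : Af n n x = Af n 0 x := by
      rw [← Af_mod n n x, Nat.mod_self]
    rw [h1, h2]
  · have hx := sep n hn i j x (by omega) hj hcyc hPi hPj
    rw [hx, Af_zero, Af_zero]

lemma agree (n : ℕ) (hn : 3 ≤ n) {x : ℝ × ℝ} {i j : ℕ}
    (hi : i < n) (hj : j < n) (hPi : P n x i) (hPj : P n x j) :
    Af n i x = Af n j x := by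
  rcases le_total i j with h | h
  · exact agree_le n hn h hi hj hPi hPj
  · exact (agree_le n hn h hj hi hPj hPi).symm

lemma F_eq (n : ℕ) (hn : 3 ≤ n) {x : ℝ × ℝ} {i : ℕ} (hP : P n x i) :
    Fn n x = Af n i x := by
  classical
  have hex : ∃ k, P n x k := ⟨i, hP⟩
  unfold Fn
  rw [dif_pos hex]
  have hPm : P n x (i % n) := (P_mod n i x).mpr hP
  have h1 : Nat.find hex ≤ i % n := Nat.find_le hPm
  have h2 : Nat.find hex < n := lt_of_le_of_lt h1 (Nat.mod_lt _ (by omega))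
  have h3 := agree n hn h2 (Nat.mod_lt _ (by omega)) (Nat.find_spec hex) hPm
  rw [h3, Af_mod]


lemma pp_add_n (n i : ℕ) : pp n (i + n) = pp n i := by unfold pp; rw [vv_add_n]
lemma qq_add_n (n i : ℕ) : qq n (i + n) = qq n i := by unfold qq; rw [vv_add_n]

lemma iterF (n : ℕ) (hn : 3 ≤ n) (s t : ℝ) (hs : 0 ≤ s) (ht : 0 ≤ t) :
    ∀ (k i : ℕ) (x : ℝ × ℝ), x.1 = s * pp n i + t * pp n (i+1) →
      x.2 = s * qq n i + t * qq n (i+1) →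
      (Fn n)^[k] x = (s * pp n (i+k) + t * pp n (i+k+1), s * qq n (i+k) + t * qq n (i+k+1)) := by
  intro k
  induction k with
  | zero =>
      intro i x h1 h2
      simp only [Function.iterate_zero, id_eq, Nat.add_zero]
      rw [Prod.ext_iff]
      exact ⟨h1, h2⟩
  | succ k ih =>
      intro i x h1 h2
      have hg := g_decomp n hn i s t x h1 h2
      have hP : P n x i := ⟨by rw [hg.1]; exact ht, by rw [hg.2]; linarith⟩
      rw [Function.iterate_succ_apply]
      have hF : Fn n x = (s * pp n (i+1) + t * pp n (i+2), s * qq n (i+1) + t * qq n (i+2)) := by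
        rw [F_eq n hn hP, Af_map n hn i s t x h1 h2]
      have hrec := ih (i+1) (Fn n x) (by rw [hF]) (by rw [hF])
      have e1 : i + 1 + k = i + (k+1) := by omega
      rw [e1] at hrec
      exact hrec

lemma Fn_iterate_n (n : ℕ) (hn : 3 ≤ n) : (Fn n)^[n] = id := by
  funext x
  obtain ⟨i, hi, hP⟩ := cover_lt n hn x
  obtain ⟨h1, h2⟩ := decomp_of_g n hn i x
  have hs : 0 ≤ -(gR n (i+1) x) := neg_nonneg.mpr hP.2
  have hit2 := iterF n hn (-(gR n (i+1) x)) (gR n i x) hs hP.1 n i x h1 h2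
  rw [hit2]
  have e1 : i + n + 1 = (i + 1) + n := by omega
  rw [e1, pp_add_n, qq_add_n, pp_add_n, qq_add_n]
  rw [id_eq, Prod.ext_iff]
  exact ⟨h1.symm, h2.symm⟩

lemma Fn_iter_ne (n : ℕ) (hn : 3 ≤ n) (k : ℕ) (h1k : 1 ≤ k) (hkn : k < n) :
    (Fn n)^[k] ≠ id := by
  intro hid
  have hp0 : pp n 0 = 1 := by unfold pp; rw [vv_zero n hn]; norm_num
  have hq0 : qq n 0 = 0 := by unfold qq; rw [vv_zero n hn]; norm_num
  have h1 : ((1:ℝ), (0:ℝ)).1 = 1 * pp n 0 + 0 * pp n (0+1) := by rw [hp0]; norm_num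
  have h2 : ((1:ℝ), (0:ℝ)).2 = 1 * qq n 0 + 0 * qq n (0+1) := by rw [hq0]; norm_num
  have hit := iterF n hn 1 0 zero_le_one le_rfl k 0 ((1:ℝ), (0:ℝ)) h1 h2
  rw [hid, id_eq] at hit
  have hsnd := congrArg Prod.snd hit
  simp only [Nat.zero_add] at hsnd
  have hq : (vv n k).2 = 1 ∨ (vv n k).2 = -1 := by
    unfold vv base
    rw [Nat.mod_eq_of_lt hkn, if_neg (by omega)]
    by_cases h : k = n - 1
    · rw [if_pos h]; right; rfl
    · rw [if_neg h]; left; rfl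
  have : qq n k = 1 ∨ qq n k = -1 := by
    unfold qq; rcases hq with h | h <;> rw [h] <;> norm_num
  rcases this with h | h <;> rw [h] at hsnd <;> norm_num at hsnd

lemma Fn_maps (n : ℕ) (hn : 3 ≤ n) : ∀ x ∈ latticePts, Fn n x ∈ latticePts := by
  rintro x ⟨p, hp⟩
  obtain ⟨i, hi, hP⟩ := cover_lt n hn x
  rw [F_eq n hn hP]
  refine ⟨(aI n i * p.1 + bI n i * p.2, cI n i * p.1 + eI n i * p.2), ?_⟩
  subst hp
  unfold Af
  rw [Prod.ext_iff]
  constructor <;> simp <;> push_cast <;> ring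

lemma Fn_image (n : ℕ) (hn : 3 ≤ n) : Fn n '' latticePts = latticePts := by
  apply Set.Subset.antisymm
  · rintro y ⟨x, hx, rfl⟩
    exact Fn_maps n hn x hx
  · intro y hy
    have hiter : ∀ m, (Fn n)^[m] y ∈ latticePts := by
      intro m
      induction m with
      | zero => exact hy
      | succ m ih =>
          rw [Function.iterate_succ_apply']
          exact Fn_maps n hn _ ih
    refine ⟨(Fn n)^[n-1] y, hiter (n-1), ?_⟩
    have : Fn n ((Fn n)^[n-1] y) = (Fn n)^[n-1+1] y := (Function.iterate_succ_apply' _ _ _).symm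
    rw [this, show n - 1 + 1 = n from by omega, Fn_iterate_n n hn, id_eq]

lemma mem_sec (n : ℕ) (hn : 3 ≤ n) (i : ℕ) (x : ℝ × ℝ) :
    x ∈ secR (vv n i) (vv n (i+1)) ↔ P n x i := by
  constructor
  · rintro ⟨s, t, hs, ht, h1, h2⟩
    have hg := g_decomp n hn i s t x h1 h2
    exact ⟨by rw [hg.1]; exact ht, by rw [hg.2]; linarith⟩
  · intro hP
    obtain ⟨h1, h2⟩ := decomp_of_g n hn i x
    exact ⟨-(gR n (i+1) x), gR n i x, neg_nonneg.mpr hP.2, hP.1, h1, h2⟩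

lemma cont_g (n i : ℕ) : Continuous (gR n i) := by
  unfold gR
  fun_prop

lemma Fn_continuous (n : ℕ) (hn : 3 ≤ n) : Continuous (Fn n) := by
  apply LocallyFinite.continuous (f := fun i : Fin n => {x : ℝ × ℝ | P n x (i : ℕ)})
  · exact locallyFinite_of_finite _
  · ext x
    simp only [Set.mem_iUnion, Set.mem_univ, iff_true]
    obtain ⟨i, hi, hP⟩ := cover_lt n hn x
    exact ⟨⟨i, hi⟩, hP⟩
  · intro i
    have : {x : ℝ × ℝ | P n x (i : ℕ)} =
        {x : ℝ × ℝ | 0 ≤ gR n i x} ∩ {x : ℝ × ℝ | gR n ((i:ℕ)+1) x ≤ 0} := rfl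
    rw [this]
    exact (isClosed_le continuous_const (cont_g n i)).inter
      (isClosed_le (cont_g n ((i:ℕ)+1)) continuous_const)
  · intro i
    have hA : Continuous (Af n (i : ℕ)) := by unfold Af; fun_prop
    exact hA.continuousOn.congr fun x hx => F_eq n hn hx

end S9

/-- for every n ≥ 3 there is an orientation preserving piecewise linear
homeomorphism of ℝ² preserving ℤ² which has order exactly n. -/
theorem stmt9 (n : ℕ) (hn : 3 ≤ n) :
    ∃ F : ℝ × ℝ → ℝ × ℝ,
      (∃ H : (ℝ × ℝ) ≃ₜ (ℝ × ℝ), ⇑H = F) ∧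
      (∃ (d : ℕ) (v : ℕ → ℤ × ℤ), 1 ≤ d ∧ v d = v 0 ∧
        (∀ i < d, 0 < (v i).1 * (v (i+1)).2 - (v i).2 * (v (i+1)).1) ∧
        (⋃ i ∈ Finset.range d, secR (v i) (v (i+1))) = Set.univ ∧
        (∀ i < d, ∃ a b c e : ℝ, 0 < a * e - b * c ∧
          ∀ x ∈ secR (v i) (v (i+1)),
            F x = (a * x.1 + b * x.2, c * x.1 + e * x.2))) ∧
      F '' latticePts = latticePts ∧
      F^[n] = id ∧ (∀ k, 1 ≤ k → k < n → F^[k] ≠ id) := by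
  refine ⟨S9.Fn n, ?_, ?_, S9.Fn_image n hn, S9.Fn_iterate_n n hn,
    fun k h1 h2 => S9.Fn_iter_ne n hn k h1 h2⟩
  · refine ⟨⟨⟨S9.Fn n, (S9.Fn n)^[n-1], ?_, ?_⟩,
      S9.Fn_continuous n hn, (S9.Fn_continuous n hn).iterate _⟩, rfl⟩
    · intro x
      show (S9.Fn n)^[n-1] (S9.Fn n x) = x
      have h := Function.iterate_succ_apply (S9.Fn n) (n-1) x
      rw [← h, show (n - 1).succ = n from by omega, S9.Fn_iterate_n n hn, id_eq]
    · intro x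
      show S9.Fn n ((S9.Fn n)^[n-1] x) = x
      have h := Function.iterate_succ_apply' (S9.Fn n) (n-1) x
      rw [← h, show (n - 1).succ = n from by omega, S9.Fn_iterate_n n hn, id_eq]
  · refine ⟨n, S9.vv n, by omega, ?_, ?_, ?_, ?_⟩
    · unfold S9.vv
      rw [Nat.mod_self, Nat.zero_mod]
    · intro i _
      rw [S9.hdetZ n hn i]
      exact one_pos
    · ext x
      simp only [Set.mem_iUnion, Set.mem_univ, iff_true, Finset.mem_range]
      obtain ⟨i, hi, hP⟩ := S9.cover_lt n hn x
      exact ⟨i, hi, (S9.mem_sec n hn i x).mpr hP⟩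
    · intro i _
      refine ⟨(S9.aI n i : ℝ), (S9.bI n i : ℝ), (S9.cI n i : ℝ), (S9.eI n i : ℝ), ?_, ?_⟩
      · have hd := S9.detA n hn i
        have : (S9.aI n i : ℝ) * (S9.eI n i : ℝ) - (S9.bI n i : ℝ) * (S9.cI n i : ℝ)
            = ((S9.aI n i * S9.eI n i - S9.bI n i * S9.cI n i : ℤ) : ℝ) := by push_cast; ring
        rw [this, hd]
        norm_num
      · intro x hx
        rw [S9.F_eq n hn ((S9.mem_sec n hn i x).mp hx)]
        rfl
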